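/- The function u(x,t) = 4(1 − x² + t²)/(1 + x² + t²)², which equals 2·∂²/∂x² [ln(1 + x² + t²)], satisfies the Boussinesq equation u_tt + u_xx − (u²)_xx − (1/3)·u_xxxx = 0 for all (x,t) ∈ ℝ². -/

import Mathlib

/-- Partial derivative in the first (space) variable. -/
noncomputable def dX (f : ℝ → ℝ → ℝ) : ℝ → ℝ → ℝ := fun x t => deriv (fun x' => f x' t) x

/-- Partial derivative in the second (time) variable. -/
noncomputable def dT (f : ℝ → ℝ → ℝ) : ℝ → ℝ → ℝ := fun x t => deriv (fun t' => f x t') t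

/-- The Boussinesq equation `u_tt + u_xx − (u²)_xx − (1/3) u_xxxx = 0` on all of ℝ². -/
def IsBoussinesqSolution (u : ℝ → ℝ → ℝ) : Prop :=
  ∀ x t : ℝ,
    dT (dT u) x t + dX (dX u) x t - dX (dX (fun x' t' => (u x' t') ^ 2)) x t
      - (1 / 3) * dX (dX (dX (dX u))) x t = 0

/-- Quotient rule specialized to denominator `(c + z^2)^(k+1)` with `c > 0`. -/
lemma keyD (c : ℝ) (hc : 0 < c) (k : ℕ) {N : ℝ → ℝ} {N' : ℝ} (y : ℝ)
    (hN : HasDerivAt N N' y) (g : ℝ → ℝ) (d : ℝ)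
    (hg : ∀ z, g z = N z / (c + z ^ 2) ^ (k + 1))
    (hd : d = (N' * (c + y ^ 2) - N y * (((k : ℝ) + 1) * (2 * y)))
        / (c + y ^ 2) ^ (k + 2)) :
    HasDerivAt g d y := by
  have h0 : (0:ℝ) < c + y ^ 2 := by positivity
  have h1 : HasDerivAt (fun z : ℝ => c + z ^ 2) (2 * y) y := by
    simpa using ((hasDerivAt_pow 2 y).const_add c)
  have hpow := h1.pow (k + 1)
  have hne : (c + y ^ 2) ^ (k + 1) ≠ 0 := by positivity
  have h := hN.div hpow hne
  have hgf : g = fun z => N z / (c + z ^ 2) ^ (k + 1) := funext hg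
  rw [hgf, hd]
  refine h.congr_deriv ?_
  simp only [Pi.pow_apply]
  rw [div_eq_div_iff (by positivity) (by positivity)]
  simp only [Nat.add_sub_cancel]
  push_cast
  ring

lemma L0 (t x : ℝ) :
    HasDerivAt (fun z : ℝ => 4 * (1 - z ^ 2 + t ^ 2) / (1 + z ^ 2 + t ^ 2) ^ 2)
      ((8 * x ^ 3 - 24 * x - 24 * x * t ^ 2) / (1 + x ^ 2 + t ^ 2) ^ 3) x := by
  have hne : ((1 + t ^ 2) + x ^ 2 : ℝ) ≠ 0 := by positivity
  have hne2 : (1 + x ^ 2 + t ^ 2 : ℝ) ≠ 0 := by positivity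
  have hN : HasDerivAt (fun z : ℝ => 4 - 4 * z ^ 2 + 4 * t ^ 2) (-(8 * x)) x := by
    have := ((hasDerivAt_const x (4:ℝ)).sub ((hasDerivAt_pow 2 x).const_mul 4)).add
      (hasDerivAt_const x (4 * t ^ 2))
    refine this.congr_deriv ?_
    push_cast; ring
  refine keyD (1 + t ^ 2) (by positivity) 1 x hN _ _ (fun z => by ring) ?_
  field_simp
  ring

lemma L1 (t x : ℝ) :
    HasDerivAt (fun z : ℝ => (8 * z ^ 3 - 24 * z - 24 * z * t ^ 2) / (1 + z ^ 2 + t ^ 2) ^ 3)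
      (((-24) * x ^ 4 + 144 * x ^ 2 + 144 * x ^ 2 * t ^ 2 - 24 - 48 * t ^ 2 - 24 * t ^ 4)
        / (1 + x ^ 2 + t ^ 2) ^ 4) x := by
  have hne : ((1 + t ^ 2) + x ^ 2 : ℝ) ≠ 0 := by positivity
  have hne2 : (1 + x ^ 2 + t ^ 2 : ℝ) ≠ 0 := by positivity
  have hN : HasDerivAt (fun z : ℝ => 8 * z ^ 3 - (24 + 24 * t ^ 2) * z)
      (24 * x ^ 2 - 24 - 24 * t ^ 2) x := by
    have := ((hasDerivAt_pow 3 x).const_mul (8:ℝ)).sub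
      ((hasDerivAt_id x).const_mul (24 + 24 * t ^ 2))
    refine this.congr_deriv ?_
    push_cast; ring
  refine keyD (1 + t ^ 2) (by positivity) 2 x hN _ _ (fun z => by ring) ?_
  field_simp
  ring

lemma L2 (t x : ℝ) :
    HasDerivAt (fun z : ℝ =>
        ((-24) * z ^ 4 + 144 * z ^ 2 + 144 * z ^ 2 * t ^ 2 - 24 - 48 * t ^ 2 - 24 * t ^ 4)
          / (1 + z ^ 2 + t ^ 2) ^ 4)
      ((96 * x ^ 5 - 960 * x ^ 3 - 960 * x ^ 3 * t ^ 2 + 480 * x + 960 * x * t ^ 2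
          + 480 * x * t ^ 4) / (1 + x ^ 2 + t ^ 2) ^ 5) x := by
  have hne : ((1 + t ^ 2) + x ^ 2 : ℝ) ≠ 0 := by positivity
  have hne2 : (1 + x ^ 2 + t ^ 2 : ℝ) ≠ 0 := by positivity
  have hN : HasDerivAt
      (fun z : ℝ => (-24) * z ^ 4 + (144 + 144 * t ^ 2) * z ^ 2 - (24 + 48 * t ^ 2 + 24 * t ^ 4))
      ((-96) * x ^ 3 + (288 + 288 * t ^ 2) * x) x := by
    have := (((hasDerivAt_pow 4 x).const_mul (-24:ℝ)).add
      ((hasDerivAt_pow 2 x).const_mul (144 + 144 * t ^ 2))).sub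
      (hasDerivAt_const x (24 + 48 * t ^ 2 + 24 * t ^ 4))
    refine this.congr_deriv ?_
    push_cast; ring
  refine keyD (1 + t ^ 2) (by positivity) 3 x hN _ _ (fun z => by ring) ?_
  field_simp
  ring

lemma L3 (t x : ℝ) :
    HasDerivAt (fun z : ℝ =>
        (96 * z ^ 5 - 960 * z ^ 3 - 960 * z ^ 3 * t ^ 2 + 480 * z + 960 * z * t ^ 2
          + 480 * z * t ^ 4) / (1 + z ^ 2 + t ^ 2) ^ 5)
      (((-480) * x ^ 6 + 7200 * x ^ 4 + 7200 * x ^ 4 * t ^ 2 - 7200 * x ^ 2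
          - 14400 * x ^ 2 * t ^ 2 - 7200 * x ^ 2 * t ^ 4 + 480 + 1440 * t ^ 2 + 1440 * t ^ 4
          + 480 * t ^ 6) / (1 + x ^ 2 + t ^ 2) ^ 6) x := by
  have hne : ((1 + t ^ 2) + x ^ 2 : ℝ) ≠ 0 := by positivity
  have hne2 : (1 + x ^ 2 + t ^ 2 : ℝ) ≠ 0 := by positivity
  have hN : HasDerivAt
      (fun z : ℝ => 96 * z ^ 5 - (960 + 960 * t ^ 2) * z ^ 3
        + (480 + 960 * t ^ 2 + 480 * t ^ 4) * z)
      (480 * x ^ 4 - (2880 + 2880 * t ^ 2) * x ^ 2 + (480 + 960 * t ^ 2 + 480 * t ^ 4)) x := by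
    have := (((hasDerivAt_pow 5 x).const_mul (96:ℝ)).sub
      ((hasDerivAt_pow 3 x).const_mul (960 + 960 * t ^ 2))).add
      ((hasDerivAt_id x).const_mul (480 + 960 * t ^ 2 + 480 * t ^ 4))
    refine this.congr_deriv ?_
    push_cast; ring
  refine keyD (1 + t ^ 2) (by positivity) 4 x hN _ _ (fun z => by ring) ?_
  field_simp
  ring

lemma LTd (x t : ℝ) :
    HasDerivAt (fun s : ℝ => 4 * (1 - x ^ 2 + s ^ 2) / (1 + x ^ 2 + s ^ 2) ^ 2)
      (((-8) * t + 24 * t * x ^ 2 - 8 * t ^ 3) / (1 + x ^ 2 + t ^ 2) ^ 3) t := by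
  have hne : ((1 + x ^ 2) + t ^ 2 : ℝ) ≠ 0 := by positivity
  have hne2 : (1 + x ^ 2 + t ^ 2 : ℝ) ≠ 0 := by positivity
  have hN : HasDerivAt (fun s : ℝ => 4 - 4 * x ^ 2 + 4 * s ^ 2) (8 * t) t := by
    have := (hasDerivAt_const t (4 - 4 * x ^ 2 : ℝ)).add ((hasDerivAt_pow 2 t).const_mul 4)
    refine this.congr_deriv ?_
    push_cast; ring
  refine keyD (1 + x ^ 2) (by positivity) 1 t hN _ _ (fun s => by ring) ?_
  field_simp
  ring

lemma LTTd (x t : ℝ) :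
    HasDerivAt (fun s : ℝ => ((-8) * s + 24 * s * x ^ 2 - 8 * s ^ 3) / (1 + x ^ 2 + s ^ 2) ^ 3)
      (((-8) + 16 * x ^ 2 + 24 * x ^ 4 + 16 * t ^ 2 - 144 * x ^ 2 * t ^ 2 + 24 * t ^ 4)
        / (1 + x ^ 2 + t ^ 2) ^ 4) t := by
  have hne : ((1 + x ^ 2) + t ^ 2 : ℝ) ≠ 0 := by positivity
  have hne2 : (1 + x ^ 2 + t ^ 2 : ℝ) ≠ 0 := by positivity
  have hN : HasDerivAt (fun s : ℝ => (24 * x ^ 2 - 8) * s - 8 * s ^ 3)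
      (24 * x ^ 2 - 8 - 24 * t ^ 2) t := by
    have := ((hasDerivAt_id t).const_mul (24 * x ^ 2 - 8 : ℝ)).sub
      ((hasDerivAt_pow 3 t).const_mul 8)
    refine this.congr_deriv ?_
    push_cast; ring
  refine keyD (1 + x ^ 2) (by positivity) 2 t hN _ _ (fun s => by ring) ?_
  field_simp
  ring

lemma Llog (t x : ℝ) :
    HasDerivAt (fun z : ℝ => Real.log (1 + z ^ 2 + t ^ 2)) (2 * x / (1 + x ^ 2 + t ^ 2)) x := by
  have h1 : HasDerivAt (fun z : ℝ => 1 + z ^ 2 + t ^ 2) (2 * x) x := by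
    simpa using (((hasDerivAt_pow 2 x).const_add 1).add_const (t ^ 2))
  exact h1.log (by positivity)

lemma Llog2 (t x : ℝ) :
    HasDerivAt (fun z : ℝ => 2 * z / (1 + z ^ 2 + t ^ 2))
      ((2 + 2 * t ^ 2 - 2 * x ^ 2) / (1 + x ^ 2 + t ^ 2) ^ 2) x := by
  have hne : ((1 + t ^ 2) + x ^ 2 : ℝ) ≠ 0 := by positivity
  have hne2 : (1 + x ^ 2 + t ^ 2 : ℝ) ≠ 0 := by positivity
  have hN : HasDerivAt (fun z : ℝ => 2 * z) (2:ℝ) x := by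
    simpa using (hasDerivAt_id x).const_mul (2:ℝ)
  refine keyD (1 + t ^ 2) (by positivity) 0 x hN _ _ (fun z => by ring) ?_
  field_simp
  ring

theorem boussinesq_rational_u1 :
    (∀ x t : ℝ,
      4 * (1 - x ^ 2 + t ^ 2) / (1 + x ^ 2 + t ^ 2) ^ 2
        = 2 * dX (dX (fun x' t' => Real.log (1 + x' ^ 2 + t' ^ 2))) x t) ∧
    IsBoussinesqSolution (fun x t => 4 * (1 - x ^ 2 + t ^ 2) / (1 + x ^ 2 + t ^ 2) ^ 2) := by
  constructor
  · intro x t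
    have h1 : dX (fun x' t' => Real.log (1 + x' ^ 2 + t' ^ 2))
        = fun a b => 2 * a / (1 + a ^ 2 + b ^ 2) := by
      funext a b
      simp only [dX]
      exact (Llog b a).deriv
    rw [h1]
    simp only [dX]
    rw [(Llog2 t x).deriv]
    have hne2 : (1 + x ^ 2 + t ^ 2 : ℝ) ≠ 0 := by positivity
    field_simp
    ring
  · intro x t
    have e1 : dX (fun x' t' => 4 * (1 - x' ^ 2 + t' ^ 2) / (1 + x' ^ 2 + t' ^ 2) ^ 2)
        = fun a b => (8 * a ^ 3 - 24 * a - 24 * a * b ^ 2) / (1 + a ^ 2 + b ^ 2) ^ 3 := by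
      funext a b; simp only [dX]; exact (L0 b a).deriv
    have e2 : dX (fun a b => (8 * a ^ 3 - 24 * a - 24 * a * b ^ 2) / (1 + a ^ 2 + b ^ 2) ^ 3)
        = fun a b => ((-24) * a ^ 4 + 144 * a ^ 2 + 144 * a ^ 2 * b ^ 2 - 24 - 48 * b ^ 2
            - 24 * b ^ 4) / (1 + a ^ 2 + b ^ 2) ^ 4 := by
      funext a b; simp only [dX]; exact (L1 b a).deriv
    have e3 : dX (fun a b => ((-24) * a ^ 4 + 144 * a ^ 2 + 144 * a ^ 2 * b ^ 2 - 24 - 48 * b ^ 2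
            - 24 * b ^ 4) / (1 + a ^ 2 + b ^ 2) ^ 4)
        = fun a b => (96 * a ^ 5 - 960 * a ^ 3 - 960 * a ^ 3 * b ^ 2 + 480 * a + 960 * a * b ^ 2
            + 480 * a * b ^ 4) / (1 + a ^ 2 + b ^ 2) ^ 5 := by
      funext a b; simp only [dX]; exact (L2 b a).deriv
    have e4 : dX (fun a b => (96 * a ^ 5 - 960 * a ^ 3 - 960 * a ^ 3 * b ^ 2 + 480 * a
            + 960 * a * b ^ 2 + 480 * a * b ^ 4) / (1 + a ^ 2 + b ^ 2) ^ 5)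
        = fun a b => ((-480) * a ^ 6 + 7200 * a ^ 4 + 7200 * a ^ 4 * b ^ 2 - 7200 * a ^ 2
            - 14400 * a ^ 2 * b ^ 2 - 7200 * a ^ 2 * b ^ 4 + 480 + 1440 * b ^ 2 + 1440 * b ^ 4
            + 480 * b ^ 6) / (1 + a ^ 2 + b ^ 2) ^ 6 := by
      funext a b; simp only [dX]; exact (L3 b a).deriv
    have eT : dT (fun x' t' => 4 * (1 - x' ^ 2 + t' ^ 2) / (1 + x' ^ 2 + t' ^ 2) ^ 2)
        = fun a b => ((-8) * b + 24 * b * a ^ 2 - 8 * b ^ 3) / (1 + a ^ 2 + b ^ 2) ^ 3 := by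
      funext a b; simp only [dT]; exact (LTd a b).deriv
    have eTT : dT (fun a b => ((-8) * b + 24 * b * a ^ 2 - 8 * b ^ 3) / (1 + a ^ 2 + b ^ 2) ^ 3)
        = fun a b => ((-8) + 16 * a ^ 2 + 24 * a ^ 4 + 16 * b ^ 2 - 144 * a ^ 2 * b ^ 2
            + 24 * b ^ 4) / (1 + a ^ 2 + b ^ 2) ^ 4 := by
      funext a b; simp only [dT]; exact (LTTd a b).deriv
    have ew : dX (fun x' t' =>
          (4 * (1 - x' ^ 2 + t' ^ 2) / (1 + x' ^ 2 + t' ^ 2) ^ 2) ^ 2)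
        = fun a b => 2 * ((4 * (1 - a ^ 2 + b ^ 2) / (1 + a ^ 2 + b ^ 2) ^ 2)
            * ((8 * a ^ 3 - 24 * a - 24 * a * b ^ 2) / (1 + a ^ 2 + b ^ 2) ^ 3)) := by
      funext a b
      simp only [dX]
      rw [HasDerivAt.deriv (f := fun z => (4 * (1 - z ^ 2 + b ^ 2) / (1 + z ^ 2 + b ^ 2) ^ 2) ^ 2) ((L0 b a).pow 2)]
      push_cast
      ring
    have ew2 : dX (fun a b => 2 * ((4 * (1 - a ^ 2 + b ^ 2) / (1 + a ^ 2 + b ^ 2) ^ 2)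
            * ((8 * a ^ 3 - 24 * a - 24 * a * b ^ 2) / (1 + a ^ 2 + b ^ 2) ^ 3)))
        = fun a b => 2 * ((8 * a ^ 3 - 24 * a - 24 * a * b ^ 2) / (1 + a ^ 2 + b ^ 2) ^ 3
              * ((8 * a ^ 3 - 24 * a - 24 * a * b ^ 2) / (1 + a ^ 2 + b ^ 2) ^ 3)
            + 4 * (1 - a ^ 2 + b ^ 2) / (1 + a ^ 2 + b ^ 2) ^ 2
              * (((-24) * a ^ 4 + 144 * a ^ 2 + 144 * a ^ 2 * b ^ 2 - 24 - 48 * b ^ 2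
                - 24 * b ^ 4) / (1 + a ^ 2 + b ^ 2) ^ 4)) := by
      funext a b
      simp only [dX]
      exact (((L0 b a).mul (L1 b a)).const_mul 2).deriv
    simp only []
    rw [eT, eTT, e1, e2, e3, e4, ew, ew2]
    have hne2 : (1 + x ^ 2 + t ^ 2 : ℝ) ≠ 0 := by positivity
    field_simp
    ring
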